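/- Let K/k be a q-finite purely inseparable extension of characteristic p > 0 that is unbounded (of infinite exponent). Then the relative perfect closure rp(K/k) is also of unbounded exponent over k; in particular rp(K/k) ≠ k. -/

import Mathlib

/-!
Common definitions: purely inseparable extension theory (r-bases, degree of
irrationality, relative perfect closure, modularity), following Fliouet,
"Extensions absolument lq-finies".
-/

open IntermediateField

noncomputable section

/-- `k(K^p)`: the intermediate field of `K/k` generated by the `p`-th powers of `K`. -/
def pClosure (k K : Type*) [Field k] [Field K] [Algebra k K] (p : ℕ) : IntermediateField k K :=
  adjoin k {x : K | ∃ y : K, y ^ p = x}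

/-- `k(K^{p^n})`. -/
def pnClosure (k K : Type*) [Field k] [Field K] [Algebra k K] (p n : ℕ) : IntermediateField k K :=
  adjoin k {x : K | ∃ y : K, y ^ p ^ n = x}

/-- `k(L^p)` for an intermediate field `L` of `Ω/k`. -/
def pClosureOf {k Ω : Type*} [Field k] [Field Ω] [Algebra k Ω] (p : ℕ)
    (L : IntermediateField k Ω) : IntermediateField k Ω :=
  adjoin k {x : Ω | ∃ y ∈ L, y ^ p = x}

/-- `B` is `r`-free over the intermediate field `L` (typically `L = k(K^p)`):
no `x ∈ B` belongs to `L(B \ {x})`. -/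
def RFreeOver {k K : Type*} [Field k] [Field K] [Algebra k K]
    (L : IntermediateField k K) (B : Set K) : Prop :=
  ∀ x ∈ B, x ∉ adjoin L (B \ {x})

/-- `B` is an `r`-basis of `K/k` : `K = k(K^p)(B)` and `B` is `r`-free over `k(K^p)`. -/
def RBasis (k K : Type*) [Field k] [Field K] [Algebra k K] (p : ℕ) (B : Set K) : Prop :=
  adjoin (pClosure k K p) B = ⊤ ∧ RFreeOver (pClosure k K p) B

/-- `B` is an `r`-basis of `L/F` where `F ≤ L` are intermediate fields of `Ω/k`:
`L = F(L^p)(B)` and no `x ∈ B` lies in `F(L^p)(B \ {x})`. -/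
def RBasisRel {k Ω : Type*} [Field k] [Field Ω] [Algebra k Ω] (p : ℕ)
    (F L : IntermediateField k Ω) (B : Set Ω) : Prop :=
  B ⊆ (L : Set Ω) ∧ F ⊔ pClosureOf p L ⊔ adjoin k B = L ∧
    ∀ x ∈ B, x ∉ F ⊔ pClosureOf p L ⊔ adjoin k (B \ {x})

/-- The degree of irrationality of a bounded-exponent extension:
the cardinality of an `r`-basis of `K/k`. -/
def diCard (k K : Type*) [Field k] [Field K] [Algebra k K] (p : ℕ) : Cardinal :=
  sInf {c : Cardinal | ∃ B : Set K, RBasis k K p B ∧ Cardinal.mk B = c}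

/-- `k^{p^{-n}} ∩ K = {x ∈ K | x^{p^n} ∈ k}`. -/
def expleq (k K : Type*) [Field k] [Field K] [Algebra k K] (p n : ℕ) : IntermediateField k K :=
  adjoin k {x : K | x ^ p ^ n ∈ (algebraMap k K).range}

/-- The degree of irrationality `di(K/k) = sup_n di(k^{p^{-n}} ∩ K / k)`. -/
def di (k K : Type*) [Field k] [Field K] [Algebra k K] (p : ℕ) : Cardinal :=
  ⨆ n : ℕ, diCard k (expleq k K p n) p

/-- The relative perfect closure `rp(K/k)`: the largest intermediate field `L`
with `k(L^p) = L`. -/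
def rp (k K : Type*) [Field k] [Field K] [Algebra k K] (p : ℕ) : IntermediateField k K :=
  sSup {L : IntermediateField k K | pClosureOf p L = L}

/-- `K/k` has unbounded exponent. -/
def UnboundedExp (k K : Type*) [Field k] [Field K] [Algebra k K] (p : ℕ) : Prop :=
  ∀ e : ℕ, ∃ x : K, x ^ p ^ e ∉ (algebraMap k K).range

/-- `K^{p^n}` as a subfield of `K`. -/
def pnPowers (K : Type*) [Field K] (p n : ℕ) : Subfield K :=
  Subfield.closure {x : K | ∃ y : K, y ^ p ^ n = x}

/-- `K/k` is modular: for each `n`, `K^{p^n}` and `k` are linearly disjoint over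
`K^{p^n} ∩ k`, i.e. every finite family of elements of `K^{p^n}` that is linearly
independent over `K^{p^n} ∩ k` remains linearly independent over `k`. -/
def Modular (k K : Type*) [Field k] [Field K] [Algebra k K] (p : ℕ) : Prop :=
  ∀ n : ℕ, ∀ s : Finset K, (↑s : Set K) ⊆ (pnPowers K p n : Set K) →
    LinearIndependent ↥(pnPowers K p n ⊓ (algebraMap k K).fieldRange)
      (fun x : s => (x : K)) →
    LinearIndependent ↥((algebraMap k K).fieldRange) (fun x : s => (x : K))

/-- The exponent `o(a, F)` of `a` over an intermediate field `F`:
the least `m` with `a^{p^m} ∈ F`. -/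
def expOf {k K : Type*} [Field k] [Field K] [Algebra k K] (p : ℕ)
    (F : IntermediateField k K) (a : K) : ℕ :=
  sInf {m : ℕ | a ^ p ^ m ∈ F}

/-- An intermediate field `L` of `K/k` is equiexponential of exponent `e` over `k`:
there is an `r`-basis `G` of `L/k` with `o(a, k(G \ {a})) = o(a, k) = e` for all `a ∈ G`. -/
def EquiExpOf {k K : Type*} [Field k] [Field K] [Algebra k K] (p : ℕ)
    (e : ℕ) (L : IntermediateField k K) : Prop :=
  ∃ G : Set K, RBasisRel p ⊥ L G ∧
    ∀ a ∈ G, expOf p (adjoin k (G \ {a})) a = e ∧ expOf p (⊥ : IntermediateField k K) a = e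

end

namespace St11

open IntermediateField Submodule

variable {p : ℕ} [Fact p.Prime] {k K : Type*} [Field k] [Field K] [Algebra k K]

/-- The `k`-span of `Y·S`. -/
def Sp (Y : IntermediateField k K) (S : Set K) : Submodule k K :=
  Submodule.span k {z : K | ∃ y ∈ Y, ∃ s ∈ S, z = y * s}

theorem mul_mem_Sp {Y : IntermediateField k K} {S : Set K} {y s : K}
    (hy : y ∈ Y) (hs : s ∈ S) : y * s ∈ Sp Y S :=
  Submodule.subset_span ⟨y, hy, s, hs, rfl⟩

theorem Sp_mono_left {Y Y' : IntermediateField k K} (h : Y ≤ Y') (S : Set K) :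
    Sp Y S ≤ Sp Y' S :=
  Submodule.span_mono fun z ⟨y, hy, s, hs, hz⟩ => ⟨y, h hy, s, hs, hz⟩

theorem smul_mem_Sp {Y : IntermediateField k K} {S : Set K} {y x : K}
    (hy : y ∈ Y) (hx : x ∈ Sp Y S) : y * x ∈ Sp Y S := by
  induction hx using Submodule.span_induction with
  | mem z hz =>
      obtain ⟨y', hy', s, hs, rfl⟩ := hz
      rw [← mul_assoc]; exact mul_mem_Sp (mul_mem hy hy') hs
  | zero => rw [mul_zero]; exact zero_mem _
  | add a b _ _ ha hb => rw [mul_add]; exact add_mem ha hb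
  | smul c a _ ha => rw [mul_smul_comm]; exact Submodule.smul_mem _ _ ha

theorem subset_Sp {Y : IntermediateField k K} {S : Set K} : S ⊆ (Sp Y S : Set K) := fun s hs => by
  have := mul_mem_Sp (one_mem Y) hs; rwa [one_mul] at this

theorem coe_subset_Sp {Y : IntermediateField k K} {S : Set K} (h1 : (1:K) ∈ S) :
    (Y : Set K) ⊆ (Sp Y S : Set K) := fun y hy => by
  have := mul_mem_Sp hy h1; rwa [mul_one] at this

theorem mul_mem_Sp_of_mem {Y : IntermediateField k K} {S : Set K}
    (hS : ∀ s₁ ∈ S, ∀ s₂ ∈ S, s₁ * s₂ ∈ Sp Y S) :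
    ∀ x ∈ Sp Y S, ∀ y ∈ Sp Y S, x * y ∈ Sp Y S := by
  intro x hx
  induction hx using Submodule.span_induction with
  | mem z hz =>
      obtain ⟨y', hy', s, hs, rfl⟩ := hz
      intro w hw
      induction hw using Submodule.span_induction with
      | mem z' hz' =>
          obtain ⟨y'', hy'', s', hs', rfl⟩ := hz'
          have : y' * s * (y'' * s') = y' * (y'' * (s * s')) := by ring
          rw [this]
          exact smul_mem_Sp hy' (smul_mem_Sp hy'' (hS s hs s' hs'))
      | zero => rw [mul_zero]; exact zero_mem _
      | add a b _ _ ha hb => rw [mul_add]; exact add_mem ha hb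
      | smul c a _ ha => rw [mul_smul_comm]; exact Submodule.smul_mem _ _ ha
  | zero => intro w hw; rw [zero_mul]; exact zero_mem _
  | add a b _ _ ha hb => intro w hw; rw [add_mul]; exact add_mem (ha w hw) (hb w hw)
  | smul c a _ ha => intro w hw; rw [smul_mul_assoc]; exact Submodule.smul_mem _ _ (ha w hw)

theorem aeval_mem (W : Submodule k K) (h1 : (1:K) ∈ W)
    (hmul : ∀ x ∈ W, ∀ y ∈ W, x * y ∈ W) {x : K} (hx : x ∈ W) (q : Polynomial k) :
    Polynomial.aeval x q ∈ W := by
  have hpow : ∀ n : ℕ, x ^ n ∈ W := by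
    intro n; induction n with
    | zero => simpa using h1
    | succ n ih => rw [pow_succ]; exact hmul _ ih _ hx
  induction q using Polynomial.induction_on' with
  | add f g hf hg => rw [map_add]; exact add_mem hf hg
  | monomial n a =>
      rw [Polynomial.aeval_monomial]
      have : (algebraMap k K) a * x ^ n = a • x ^ n := by
        rw [Algebra.smul_def]
      rw [this]
      exact Submodule.smul_mem _ _ (hpow n)

/-- A multiplicatively closed `k`-submodule of an integral field extension is a subfield. -/
def toSubfield' (W : Submodule k K) [Algebra.IsIntegral k K] (h1 : (1:K) ∈ W)
    (hmul : ∀ x ∈ W, ∀ y ∈ W, x * y ∈ W) : Subfield K where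
  carrier := W
  mul_mem' := fun ha hb => hmul _ ha _ hb
  one_mem' := h1
  add_mem' := fun ha hb => add_mem ha hb
  zero_mem' := zero_mem W
  neg_mem' := fun ha => neg_mem ha
  inv_mem' := by
    intro x hx
    rcases eq_or_ne x 0 with rfl | hx0
    · simpa using zero_mem W
    have hint : IsIntegral k x := Algebra.IsIntegral.isIntegral x
    have hc0 : (minpoly k x).coeff 0 ≠ 0 := minpoly.coeff_zero_ne_zero hint hx0
    have hXdiv : Polynomial.X * (minpoly k x).divX + Polynomial.C ((minpoly k x).coeff 0)
        = minpoly k x := Polynomial.X_mul_divX_add _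
    have h2 : Polynomial.aeval x (Polynomial.X * (minpoly k x).divX
        + Polynomial.C ((minpoly k x).coeff 0)) = 0 := by
      rw [hXdiv]; exact minpoly.aeval k x
    rw [map_add, map_mul, Polynomial.aeval_X, Polynomial.aeval_C] at h2
    have h0 : x * Polynomial.aeval x (minpoly k x).divX
        = - algebraMap k K ((minpoly k x).coeff 0) := by linear_combination h2
    have hmulw : x * ((-(((minpoly k x).coeff 0)⁻¹)) • Polynomial.aeval x (minpoly k x).divX)
        = 1 := by
      rw [mul_smul_comm, h0, neg_smul, smul_neg, neg_neg, Algebra.smul_def, ← map_mul,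
        inv_mul_cancel₀ hc0, map_one]
    rw [inv_eq_of_mul_eq_one_right hmulw]
    exact Submodule.smul_mem _ _ (aeval_mem W h1 hmul hx _)

theorem algebraMap_mem_of_one_mem (W : Submodule k K) (h1 : (1:K) ∈ W) (c : k) :
    algebraMap k K c ∈ W := by
  have : algebraMap k K c = c • (1:K) := by rw [Algebra.smul_def, mul_one]
  rw [this]; exact Submodule.smul_mem _ _ h1

/-- Subfield closure bound via submodule. -/
theorem closure_subset_submodule (W : Submodule k K) [Algebra.IsIntegral k K]
    (h1 : (1:K) ∈ W) (hmul : ∀ x ∈ W, ∀ y ∈ W, x * y ∈ W) (T : Set K)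
    (hT : T ⊆ (W : Set K)) :
    (Subfield.closure T : Set K) ⊆ (W : Set K) := by
  intro x hx
  have : Subfield.closure T ≤ toSubfield' W h1 hmul := by
    rw [Subfield.closure_le]; exact hT
  exact this hx

theorem adjoin_subset_submodule (W : Submodule k K) [Algebra.IsIntegral k K]
    (h1 : (1:K) ∈ W) (hmul : ∀ x ∈ W, ∀ y ∈ W, x * y ∈ W) (T : Set K)
    (hT : T ⊆ (W : Set K)) :
    (adjoin k T : Set K) ⊆ (W : Set K) := by
  refine closure_subset_submodule W h1 hmul (Set.range (algebraMap k K) ∪ T) ?_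
  rintro z (⟨c, rfl⟩ | hz)
  · exact algebraMap_mem_of_one_mem W h1 c
  · exact hT hz

end St11
namespace St11
section B
open IntermediateField Submodule

variable {p : ℕ} [Fact p.Prime] {k K : Type*} [Field k] [Field K] [Algebra k K]
  [CharP K p] [Algebra.IsIntegral k K]

theorem pow_p_mem_Sp {Y : IntermediateField k K} {S : Set K} {x : K}
    (hx : x ∈ Sp Y S) :
    x ^ p ∈ Sp (pClosureOf p Y) ((fun z : K => z ^ p) '' S) := by
  haveI : ExpChar K p := ExpChar.prime Fact.out
  obtain ⟨c, hsupp, hsum⟩ := mem_span_set.mp hx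
  rw [← hsum, Finsupp.sum, sum_pow_char]
  refine Submodule.sum_mem _ fun z hz => ?_
  obtain ⟨y, hy, s, hs, rfl⟩ := hsupp hz
  rw [smul_pow, mul_pow]
  exact Submodule.smul_mem _ _
    (mul_mem_Sp (subset_adjoin _ _ ⟨y, hy, rfl⟩) ⟨s, hs, rfl⟩)

/-- Key Frobenius step: if `X ⊆ Y·span S` then `k(Xᵖ) ⊆ k(Yᵖ)·span Sᵖ`. -/
theorem pClosureOf_subset_Sp {X Y : IntermediateField k K} {S : Set K}
    (h1 : (1:K) ∈ S) (hSX : S ⊆ (X : Set K)) (h : (X : Set K) ⊆ (Sp Y S : Set K)) :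
    (pClosureOf p X : Set K) ⊆ (Sp (pClosureOf p Y) ((fun z : K => z ^ p) '' S) : Set K) := by
  have hp1 : (1:K) ∈ (fun z : K => z ^ p) '' S := ⟨1, h1, one_pow p⟩
  have hkey : ∀ x ∈ (X : Set K), x ^ p ∈ Sp (pClosureOf p Y) ((fun z : K => z ^ p) '' S) :=
    fun x hx => pow_p_mem_Sp (h hx)
  have hmul : ∀ s₁ ∈ (fun z : K => z ^ p) '' S, ∀ s₂ ∈ (fun z : K => z ^ p) '' S,
      s₁ * s₂ ∈ Sp (pClosureOf p Y) ((fun z : K => z ^ p) '' S) := by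
    rintro _ ⟨s₁, hs₁, rfl⟩ _ ⟨s₂, hs₂, rfl⟩
    rw [← mul_pow]
    exact hkey _ (mul_mem (hSX hs₁) (hSX hs₂))
  refine adjoin_subset_submodule _ (subset_Sp hp1) (mul_mem_Sp_of_mem hmul) _ ?_
  rintro _ ⟨y, hy, rfl⟩
  exact hkey y hy

/-- Monomial spanning: the subfield generated by `Y` and `b i`'s with `(b i)^p ∈ Y`
is spanned over `Y` by monomials of degree `< p`. -/
theorem closure_subset_Sp_monomials (Y : IntermediateField k K) {β : Type*} [Fintype β]
    (b : β → K) (hb : ∀ i, (b i) ^ p ∈ Y) :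
    (Subfield.closure ((Y : Set K) ∪ Set.range b) : Set K) ⊆
      (Sp Y (Set.range fun ν : β → Fin p => ∏ i, b i ^ (ν i : ℕ)) : Set K) := by
  classical
  set S := Set.range fun ν : β → Fin p => ∏ i, b i ^ (ν i : ℕ) with hS
  have hp0 : 0 < p := (Fact.out : p.Prime).pos
  have h1 : (1:K) ∈ S := ⟨fun _ => ⟨0, hp0⟩, by simp⟩
  have hmul : ∀ s₁ ∈ S, ∀ s₂ ∈ S, s₁ * s₂ ∈ Sp Y S := by
    rintro _ ⟨ν, rfl⟩ _ ⟨μ, rfl⟩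
    have hsplit : (∏ i, b i ^ (ν i : ℕ)) * (∏ i, b i ^ (μ i : ℕ))
        = (∏ i, (b i ^ p) ^ (((ν i : ℕ) + (μ i : ℕ)) / p)) *
          ∏ i, b i ^ ((((ν i : ℕ) + (μ i : ℕ)) % p)) := by
      rw [← Finset.prod_mul_distrib, ← Finset.prod_mul_distrib]
      refine Finset.prod_congr rfl fun i _ => ?_
      rw [← pow_mul, ← pow_add, ← pow_add, Nat.div_add_mod]
    rw [hsplit]
    refine mul_mem_Sp (prod_mem fun i _ => pow_mem (hb i) _) ?_
    exact ⟨fun i => ⟨((ν i : ℕ) + (μ i : ℕ)) % p, Nat.mod_lt _ hp0⟩, rfl⟩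
  have hW := mul_mem_Sp_of_mem hmul
  refine closure_subset_submodule (Sp Y S) (subset_Sp h1) hW ((Y : Set K) ∪ Set.range b) ?_
  rintro z (hz | ⟨i, rfl⟩)
  · exact coe_subset_Sp h1 hz
  · have h1lt := (Fact.out : p.Prime).one_lt
    have hmem : (∏ j, b j ^ (((fun j => (⟨if j = i then 1 else 0, by split <;> omega⟩ : Fin p)) j : Fin p) : ℕ))
        = b i := by
      rw [Finset.prod_eq_single i]
      · show b i ^ (if i = i then 1 else 0) = b i
        rw [if_pos rfl, pow_one]
      · intro j _ hj
        show b j ^ (if j = i then 1 else 0) = 1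
        rw [if_neg hj, pow_zero]
      · intro h; exact absurd (Finset.mem_univ i) h
    exact subset_Sp ⟨_, hmem⟩

/-- Composition of spanning steps. -/
theorem Sp_comp {Y Z : IntermediateField k K} {S T : Set K}
    (hY : (Y : Set K) ⊆ (Sp Z T : Set K)) :
    (Sp Y S : Set K) ⊆ (Sp Z (Set.image2 (· * ·) T S) : Set K) := by
  intro x hx
  induction hx using Submodule.span_induction with
  | mem z hz =>
      obtain ⟨y, hy, s, hs, rfl⟩ := hz
      have hy' : y ∈ Sp Z T := hY hy
      clear hY hy
      induction hy' using Submodule.span_induction with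
      | mem w hw =>
          obtain ⟨z', hz', t, ht, rfl⟩ := hw
          rw [mul_assoc]
          exact mul_mem_Sp hz' ⟨t, ht, s, hs, rfl⟩
      | zero => rw [zero_mul]; exact zero_mem _
      | add a b _ _ ha hb => rw [add_mul]; exact add_mem ha hb
      | smul c a _ ha => rw [smul_mul_assoc]; exact Submodule.smul_mem _ _ ha
  | zero => exact zero_mem _
  | add a b _ _ ha hb => exact add_mem ha hb
  | smul c a _ ha => exact Submodule.smul_mem _ _ ha

/-- If `Y ≤ ⊥` then `Sp Y S` is just the `k`-span of `S`. -/
theorem Sp_bot_le {Y : IntermediateField k K} (hY : Y ≤ ⊥) (S : Set K) :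
    Sp Y S ≤ Submodule.span k S := by
  rw [Sp, Submodule.span_le]
  rintro _ ⟨y, hy, s, hs, rfl⟩
  obtain ⟨c, hc⟩ := IntermediateField.mem_bot.mp (hY hy)
  rw [← hc, ← Algebra.smul_def]
  exact Submodule.smul_mem _ _ (Submodule.subset_span hs)

/-- Bridge: `Sp Y S` is contained in the honest `↥Y`-span of `S`. -/
theorem Sp_le_span {Y : IntermediateField k K} {S : Set K} {x : K} (hx : x ∈ Sp Y S) :
    x ∈ Submodule.span (↥Y) S := by
  induction hx using Submodule.span_induction with
  | mem z hz =>
      obtain ⟨y, hy, s, hs, rfl⟩ := hz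
      exact Submodule.smul_mem _ (⟨y, hy⟩ : ↥Y) (Submodule.subset_span hs)
  | zero => exact zero_mem _
  | add a b _ _ ha hb => exact add_mem ha hb
  | smul c a _ ha =>
      have h2 : (c : k) • a = (algebraMap k (↥Y) c) • a := by
        rw [Algebra.smul_def, IsScalarTower.algebraMap_apply k (↥Y) K]; rfl
      rw [h2]
      exact Submodule.smul_mem _ _ ha

/-- Reverse bridge. -/
theorem span_le_Sp {Y : IntermediateField k K} {S : Set K} {x : K}
    (hx : x ∈ Submodule.span (↥Y) S) : x ∈ Sp Y S := by
  induction hx using Submodule.span_induction with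
  | mem z hz => exact subset_Sp hz
  | zero => exact zero_mem _
  | add a b _ _ ha hb => exact add_mem ha hb
  | smul c a _ ha =>
      have : (c : ↥Y) • a = (c : K) * a := rfl
      rw [this]
      exact smul_mem_Sp c.2 ha

end B
end St11
namespace St11
section C
open IntermediateField Submodule

variable {p : ℕ} [Fact p.Prime] {k K : Type*} [Field k] [Field K] [Algebra k K] [CharP K p]

/-- The subfield `{x | x^{p^e} ∈ k}`. -/
def expleqSubfield (p : ℕ) [Fact p.Prime] (k : Type*) {K : Type*} [Field k] [Field K]
    [Algebra k K] [CharP K p] (e : ℕ) : Subfield K where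
  carrier := {x : K | x ^ p ^ e ∈ (algebraMap k K).range}
  one_mem' := ⟨1, by rw [map_one, one_pow]⟩
  zero_mem' := ⟨0, by rw [map_zero, zero_pow (pow_ne_zero e (Fact.out : p.Prime).ne_zero)]⟩
  mul_mem' := by
    rintro a b ⟨c, hc⟩ ⟨d, hd⟩
    exact ⟨c * d, by rw [map_mul, hc, hd, mul_pow]⟩
  add_mem' := by
    rintro a b ⟨c, hc⟩ ⟨d, hd⟩
    exact ⟨c + d, by rw [map_add, hc, hd, add_pow_char_pow]⟩
  neg_mem' := by
    rintro a ⟨c, hc⟩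
    exact ⟨(-1) ^ p ^ e * c, by
      rw [map_mul, map_pow, map_neg, map_one, hc, ← mul_pow, neg_one_mul]⟩
  inv_mem' := by
    intro a ha
    obtain ⟨c, hc⟩ := ha
    exact ⟨c⁻¹, by rw [map_inv₀, hc, inv_pow]⟩

theorem mem_expleq {e : ℕ} {x : K} :
    x ∈ expleq k K p e ↔ x ^ p ^ e ∈ (algebraMap k K).range := by
  have hset : {x : K | x ^ p ^ e ∈ (algebraMap k K).range}
      = ((expleqSubfield p k e : Subfield K) : Set K) := rfl
  have halg : ∀ c : k, algebraMap k K c ∈ expleqSubfield p k e :=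
    fun c => ⟨c ^ p ^ e, by rw [map_pow]⟩
  constructor
  · intro hx
    have : expleq k K p e ≤ (expleqSubfield p k e).toIntermediateField halg := by
      rw [expleq, adjoin_le_iff, hset]
      exact fun z hz => hz
    exact this hx
  · intro hx
    exact subset_adjoin _ _ hx

theorem expleq_mono {e e' : ℕ} (h : e ≤ e') : expleq k K p e ≤ expleq k K p e' := by
  intro x hx
  rw [mem_expleq] at hx ⊢
  obtain ⟨c, hc⟩ := hx
  refine ⟨c ^ p ^ (e' - e), ?_⟩
  rw [map_pow, hc, ← pow_mul, ← pow_add, Nat.add_sub_cancel' h]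

theorem expleq_zero_le : expleq k K p 0 ≤ ⊥ := by
  intro x hx
  rw [mem_expleq, pow_zero, pow_one] at hx
  rwa [IntermediateField.mem_bot]

theorem exists_mem_expleq [IsPurelyInseparable k K] [CharP k p] (x : K) :
    ∃ e, x ∈ expleq k K p e := by
  haveI : ExpChar k p := ExpChar.prime Fact.out
  obtain ⟨e, he⟩ := IsPurelyInseparable.pow_mem k p x
  exact ⟨e, mem_expleq.mpr he⟩

theorem pnClosure_zero : pnClosure k K p 0 = ⊤ := by
  rw [eq_top_iff]
  intro x _
  exact subset_adjoin _ _ ⟨x, by rw [pow_zero, pow_one]⟩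

theorem pow_pn_mem (n : ℕ) (z : K) : z ^ p ^ n ∈ pnClosure k K p n :=
  subset_adjoin _ _ ⟨z, rfl⟩

theorem pow_p_mem_adjoin_image {S : Set K} {y : K} (hy : y ∈ adjoin k S) :
    y ^ p ∈ adjoin k ((fun z : K => z ^ p) '' S) := by
  induction hy using IntermediateField.adjoin_induction with
  | mem x hx => exact subset_adjoin _ _ ⟨x, hx, rfl⟩
  | algebraMap c => rw [← map_pow]; exact IntermediateField.algebraMap_mem _ _
  | add a b _ _ ha hb => rw [add_pow_char a b p]; exact add_mem ha hb
  | mul a b _ _ ha hb => rw [mul_pow]; exact mul_mem ha hb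
  | inv a _ ha => rw [inv_pow]; exact inv_mem ha

theorem pClosureOf_pnClosure (n : ℕ) :
    pClosureOf p (pnClosure k K p n) = pnClosure k K p (n + 1) := by
  apply le_antisymm
  · rw [pClosureOf, adjoin_le_iff]
    rintro _ ⟨y, hy, rfl⟩
    have h1 := pow_p_mem_adjoin_image (p := p) (k := k) (hy : y ∈ adjoin k _)
    refine IntermediateField.adjoin_le_iff.mpr ?_ h1
    rintro _ ⟨_, ⟨z, rfl⟩, rfl⟩
    refine subset_adjoin _ _ ⟨z, ?_⟩
    show z ^ p ^ (n + 1) = (z ^ p ^ n) ^ p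
    rw [← pow_mul, ← pow_succ]
  · rw [pnClosure, adjoin_le_iff]
    rintro _ ⟨y, rfl⟩
    refine subset_adjoin _ _ ⟨y ^ p ^ n, pow_pn_mem n y, ?_⟩
    rw [← pow_mul, ← pow_succ]

theorem pnClosure_succ_le (n : ℕ) : pnClosure k K p (n + 1) ≤ pnClosure k K p n := by
  rw [pnClosure, adjoin_le_iff]
  rintro _ ⟨y, rfl⟩
  have : y ^ p ^ (n+1) = (y ^ p) ^ p ^ n := by rw [← pow_mul, ← pow_succ']
  rw [this]
  exact pow_pn_mem n (y ^ p)

theorem pClosureOf_le_self (L : IntermediateField k K) : pClosureOf p L ≤ L := by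
  rw [pClosureOf, adjoin_le_iff]
  rintro _ ⟨y, hy, rfl⟩
  exact pow_mem hy p

theorem pClosureOf_mono {L L' : IntermediateField k K} (h : L ≤ L') :
    pClosureOf p L ≤ pClosureOf p L' := by
  rw [pClosureOf, adjoin_le_iff]
  rintro _ ⟨y, hy, rfl⟩
  exact subset_adjoin _ _ ⟨y, h hy, rfl⟩

theorem pClosureOf_expleq_le {e : ℕ} :
    pClosureOf p (expleq k K p (e + 1)) ≤ expleq k K p e := by
  rw [pClosureOf, adjoin_le_iff]
  rintro _ ⟨y, hy, rfl⟩
  have hy' := mem_expleq.mp hy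
  refine (mem_expleq (e := e) (x := y ^ p)).mpr ?_
  rw [← pow_mul, ← pow_succ']
  exact hy' 

theorem pClosureOf_le_pnClosure_one (L : IntermediateField k K) :
    pClosureOf p L ≤ pnClosure k K p 1 := by
  rw [pClosureOf, adjoin_le_iff]
  rintro _ ⟨y, _, rfl⟩
  refine subset_adjoin _ _ ⟨y, ?_⟩
  rw [pow_one]

end C
end St11
namespace St11
section D
open IntermediateField Submodule Polynomial

variable {p : ℕ} [Fact p.Prime] {K : Type*} [Field K] [CharP K p]

theorem frob_inj (a b : K) (h : a ^ p = b ^ p) : a = b := by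
  haveI : ExpChar K p := ExpChar.prime Fact.out
  have h2 : (a - b) ^ p = 0 := by
    rw [sub_pow_char, h, sub_self]
  have h3 := pow_eq_zero_iff (Fact.out : p.Prime).ne_zero |>.mp h2
  exact sub_eq_zero.mp h3

section Deg
variable {F₀ : Type*} [Field F₀] [Algebra F₀ K]

theorem isIntegral_of_pow_mem {u : K} {c : F₀} (hc : algebraMap F₀ K c = u ^ p) :
    IsIntegral F₀ u := by
  refine ⟨X ^ p - C c, monic_X_pow_sub_C c (Fact.out : p.Prime).ne_zero, ?_⟩
  simp [Polynomial.eval₂_sub, hc]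

theorem minpoly_and_finrank {u : K} {c : F₀} (hc : algebraMap F₀ K c = u ^ p)
    (hu : u ∉ (algebraMap F₀ K).range) :
    Module.finrank F₀ ↥(adjoin F₀ {u}) = p := by
  have hint : IsIntegral F₀ u := isIntegral_of_pow_mem hc
  have hroot : ∀ b₀ : F₀, b₀ ^ p ≠ c := by
    intro b₀ hb₀
    apply hu
    refine ⟨b₀, frob_inj (p := p) _ _ ?_⟩
    rw [← map_pow, hb₀, hc]
  have hirr : Irreducible (X ^ p - C c) :=
    X_pow_sub_C_irreducible_of_prime (Fact.out : p.Prime) hroot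
  have hmon : (X ^ p - C c).Monic := monic_X_pow_sub_C c (Fact.out : p.Prime).ne_zero
  have haev : Polynomial.aeval u (X ^ p - C c) = 0 := by
    simp [hc]
  have hmin : X ^ p - C c = minpoly F₀ u :=
    minpoly.eq_of_irreducible_of_monic hirr haev hmon
  rw [IntermediateField.adjoin.finrank hint, ← hmin, natDegree_X_pow_sub_C]

theorem exchange {x b : K}
    (hxp : x ^ p ∈ (algebraMap F₀ K).range) (hbp : b ^ p ∈ (algebraMap F₀ K).range)
    (hx : x ∉ (algebraMap F₀ K).range) (hb : b ∉ (algebraMap F₀ K).range)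
    (hmem : b ∈ adjoin F₀ {x}) : x ∈ adjoin F₀ {b} := by
  obtain ⟨c, hc⟩ := hxp
  obtain ⟨d, hd⟩ := hbp
  have hxd := minpoly_and_finrank hc hx
  have hbd := minpoly_and_finrank hd hb
  haveI : FiniteDimensional F₀ ↥(adjoin F₀ {x}) :=
    IntermediateField.adjoin.finiteDimensional (isIntegral_of_pow_mem hc)
  have hle : adjoin F₀ {b} ≤ adjoin F₀ {x} := adjoin_simple_le_iff.mpr hmem
  have heq : adjoin F₀ {b} = adjoin F₀ {x} :=
    IntermediateField.eq_of_le_of_finrank_le hle (by rw [hxd, hbd])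
  rw [heq]
  exact mem_adjoin_simple_self F₀ x

end Deg

variable {k : Type*} [Field k] [Algebra k K]

theorem range_algebraMap_interField {F₀ : Type*} [Field F₀] [Algebra F₀ K]
    (F : IntermediateField F₀ K) (z : K) :
    z ∈ (algebraMap ↥F K).range ↔ z ∈ F :=
  ⟨fun ⟨w, hw⟩ => hw ▸ w.2, fun hz => ⟨⟨z, hz⟩, rfl⟩⟩

/-- Existence of an `r`-basis. -/
theorem exists_rbasis [Algebra.IsIntegral k K] : ∃ B : Set K, RBasis k K p B := by
  classical
  set L₀ := pClosure k K p with hL₀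
  have hchain : ∀ c ⊆ {B : Set K | RFreeOver L₀ B}, IsChain (· ⊆ ·) c →
      ∃ ub ∈ {B : Set K | RFreeOver L₀ B}, ∀ s ∈ c, s ⊆ ub := by
    intro c hcS hchain
    refine ⟨⋃₀ c, ?_, fun s hs => Set.subset_sUnion_of_mem hs⟩
    intro u hu hadj
    obtain ⟨B₀, hB₀c, huB₀⟩ := hu
    obtain ⟨T, hTsub, huT⟩ := exists_finset_of_mem_adjoin hadj
    have hcover : ∀ T' : Finset K, ↑T' ⊆ ⋃₀ c → ∃ B₁ ∈ c, ↑T' ⊆ B₁ ∧ B₀ ⊆ B₁ := by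
      intro T'
      induction T' using Finset.induction with
      | empty => exact fun _ => ⟨B₀, hB₀c, by simp, subset_rfl⟩
      | @insert t T'' htT'' ih =>
          intro hsub
          obtain ⟨B₁, hB₁c, hT'', hB₀B₁⟩ := ih fun z hz =>
            hsub (by simp only [Finset.coe_insert, Set.mem_insert_iff]; exact Or.inr hz)
          obtain ⟨B₂, hB₂c, htB₂⟩ :=
            hsub (by simp only [Finset.coe_insert, Set.mem_insert_iff]; exact Or.inl rfl)
          rcases eq_or_ne B₁ B₂ with rfl | hne
          · refine ⟨B₁, hB₁c, ?_, hB₀B₁⟩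
            rw [Finset.coe_insert, Set.insert_subset_iff]
            exact ⟨htB₂, hT''⟩
          · rcases hchain hB₁c hB₂c hne with h12 | h21
            · refine ⟨B₂, hB₂c, ?_, hB₀B₁.trans h12⟩
              rw [Finset.coe_insert, Set.insert_subset_iff]
              exact ⟨htB₂, hT''.trans h12⟩
            · refine ⟨B₁, hB₁c, ?_, hB₀B₁⟩
              rw [Finset.coe_insert, Set.insert_subset_iff]
              exact ⟨h21 htB₂, hT''⟩
    obtain ⟨B₁, hB₁c, hTB₁, hB₀B₁⟩ := hcover T (hTsub.trans Set.diff_subset)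
    have huB₁ : u ∈ B₁ := hB₀B₁ huB₀
    have hunotT : u ∉ (T : Set K) := fun h => (hTsub h).2 rfl
    have : u ∈ adjoin L₀ (B₁ \ {u}) := by
      refine adjoin.mono _ _ _ ?_ huT
      intro z hz
      exact ⟨hTB₁ hz, fun hzz => hunotT (hzz ▸ hz)⟩
    exact hcS hB₁c u huB₁ this
  obtain ⟨B, hBmax⟩ := zorn_subset {B : Set K | RFreeOver L₀ B} hchain
  have hBfree : RFreeOver L₀ B := hBmax.1
  refine ⟨B, ?_, hBfree⟩
  by_contra htop
  have hex : ∃ x : K, x ∉ adjoin L₀ B := by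
    by_contra h2
    push_neg at h2
    exact htop (eq_top_iff.mpr fun x _ => h2 x)
  obtain ⟨x, hx⟩ := hex
  have hxB : x ∉ B := fun h => hx (subset_adjoin _ _ h)
  have hdiffsub : (insert x B) \ {x} ⊆ B := by
    rintro z ⟨hz, hzx⟩
    rcases Set.mem_insert_iff.mp hz with rfl | hzB
    · exact absurd rfl hzx
    · exact hzB
  have hfree : RFreeOver L₀ (insert x B) := by
    intro u hu
    rcases Set.mem_insert_iff.mp hu with rfl | huB
    · intro hmem
      exact hx (adjoin.mono _ _ _ hdiffsub hmem)
    · intro hmem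
      -- u = b ∈ B; exchange argument
      set F₀ := adjoin L₀ (B \ {u}) with hF₀
      have hbF₀ : u ∉ (algebraMap ↥F₀ K).range := by
        rw [range_algebraMap_interField]
        exact hBfree u huB
      have hxF₀ : x ∉ (algebraMap ↥F₀ K).range := by
        rw [range_algebraMap_interField]
        intro hmem2
        exact hx (adjoin.mono _ _ _ Set.diff_subset hmem2)
      have hL₀sub : ∀ z : K, z ∈ L₀ → z ∈ F₀ := by
        intro z hz
        exact F₀.algebraMap_mem ⟨z, hz⟩
      have hxpF₀ : x ^ p ∈ (algebraMap ↥F₀ K).range := by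
        rw [range_algebraMap_interField]
        exact hL₀sub _ (subset_adjoin _ _ ⟨x, rfl⟩)
      have hbpF₀ : u ^ p ∈ (algebraMap ↥F₀ K).range := by
        rw [range_algebraMap_interField]
        exact hL₀sub _ (subset_adjoin _ _ ⟨u, rfl⟩)
      have hdiffeq : insert x B \ {u} = insert x (B \ {u}) := by
        ext z
        simp only [Set.mem_diff, Set.mem_insert_iff, Set.mem_singleton_iff]
        constructor
        · rintro ⟨rfl | hzB, hzu⟩
          · exact Or.inl rfl
          · exact Or.inr ⟨hzB, hzu⟩
        · rintro (rfl | ⟨hzB, hzu⟩)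
          · exact ⟨Or.inl rfl, fun h => hxB (h ▸ huB)⟩
          · exact ⟨Or.inr hzB, hzu⟩
      have hmem' : u ∈ adjoin (↥F₀) {x} := by
        -- translate membership through subfield closures
        have h1 : u ∈ Subfield.closure
            (Set.range (algebraMap ↥L₀ K) ∪ insert x (B \ {u})) := by
          rw [← hdiffeq]; exact hmem
        have h2 : Subfield.closure (Set.range (algebraMap ↥L₀ K) ∪ insert x (B \ {u}))
            ≤ Subfield.closure (Set.range (algebraMap ↥F₀ K) ∪ {x}) := by
          rw [Subfield.closure_le]
          rintro z (hz | hz)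
          · refine Subfield.subset_closure (Set.mem_union_left _ ?_)
            obtain ⟨w, rfl⟩ := hz
            exact (range_algebraMap_interField F₀ _).mpr (hL₀sub _ w.2)
          · rcases Set.mem_insert_iff.mp hz with rfl | hzB
            · exact Subfield.subset_closure (Set.mem_union_right _ rfl)
            · refine Subfield.subset_closure (Set.mem_union_left _ ?_)
              exact (range_algebraMap_interField F₀ _).mpr (subset_adjoin _ _ hzB)
        exact h2 h1
      have hconc : x ∈ adjoin (↥F₀) {u} := exchange hxpF₀ hbpF₀ hxF₀ hbF₀ hmem'
      -- x ∈ F₀(u) ≤ adjoin L₀ B, contradiction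
      apply hx
      have h3 : Subfield.closure (Set.range (algebraMap ↥F₀ K) ∪ {u})
          ≤ (adjoin L₀ B).toSubfield := by
        rw [Subfield.closure_le]
        rintro z (hz | hz)
        · obtain ⟨w, rfl⟩ := hz
          exact adjoin.mono _ _ _ Set.diff_subset w.2
        · rcases hz with rfl
          exact subset_adjoin _ _ huB
      exact h3 hconc
  have := hBmax.2 hfree (Set.subset_insert x B)
  exact hxB (this (Set.mem_insert x B))

end D
end St11
namespace St11
set_option synthInstance.maxHeartbeats 400000
section E
open IntermediateField Submodule

theorem map_closure_subset {K K' : Type*} [Field K] [Field K'] (f : K →+* K') (s : Set K)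
    {x : K} (hx : x ∈ Subfield.closure s) : f x ∈ Subfield.closure (f '' s) := by
  have h1 : Subfield.closure s ≤ Subfield.comap f (Subfield.closure (f '' s)) :=
    Subfield.closure_le.mpr fun z hz => Subfield.subset_closure ⟨z, hz, rfl⟩
  exact h1 hx

variable {p : ℕ} [Fact p.Prime] {k K : Type*} [Field k] [Field K] [Algebra k K]

theorem diCard_attained [Algebra.IsIntegral k K] [CharP K p] :
    ∃ B : Set K, RBasis k K p B ∧ Cardinal.mk B = diCard k K p := by
  have hne : {c : Cardinal | ∃ B : Set K, RBasis k K p B ∧ Cardinal.mk B = c}.Nonempty := by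
    obtain ⟨B, hB⟩ := exists_rbasis (p := p) (k := k) (K := K)
    exact ⟨_, B, hB, rfl⟩
  obtain ⟨B, hB, hBc⟩ := csInf_mem hne
  exact ⟨B, hB, hBc⟩

theorem coe_pClosure_mem (L : IntermediateField k K) {w : ↥L}
    (hw : w ∈ pClosure k (↥L) p) : (w : K) ∈ pClosureOf p L := by
  have h1 : w ∈ Subfield.closure
      (Set.range (algebraMap k ↥L) ∪ {u : ↥L | ∃ v : ↥L, v ^ p = u}) := hw
  have h2 := map_closure_subset (algebraMap ↥L K) _ h1
  have h3 : Subfield.closure ((algebraMap ↥L K) ''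
      (Set.range (algebraMap k ↥L) ∪ {u : ↥L | ∃ v : ↥L, v ^ p = u}))
      ≤ (pClosureOf p L).toSubfield := by
    rw [Subfield.closure_le]
    rintro _ ⟨z, hz | hz, rfl⟩
    · obtain ⟨c, rfl⟩ := hz
      rw [← IsScalarTower.algebraMap_apply k ↥L K]
      exact (pClosureOf p L).algebraMap_mem c
    · obtain ⟨v, rfl⟩ := hz
      rw [map_pow]
      refine subset_adjoin _ _ ⟨algebraMap ↥L K v, ?_, rfl⟩
      exact SetLike.coe_mem v
  exact h3 h2

theorem mem_adjoin_iff_closure {F E : Type*} [Field F] [Field E] [Algebra F E]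
    (S : Set E) (x : E) :
    x ∈ adjoin F S ↔ x ∈ Subfield.closure (Set.range (algebraMap F E) ∪ S) := Iff.rfl

theorem inner_to_outer (L : IntermediateField k K) (B : Set ↥L)
    (hB : RBasis k (↥L) p B) :
    (L : Set K) ⊆ (Subfield.closure ((pClosureOf p L : Set K) ∪ ((↑) '' B)) : Set K) := by
  intro x hx
  have hmemE := hB.1.ge (show (⟨x, hx⟩ : ↥L) ∈ ⊤ from trivial)
  have h1 := (mem_adjoin_iff_closure _ _).mp hmemE
  have h2 := map_closure_subset (algebraMap ↥L K) _ h1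
  refine Subfield.closure_mono ?_ h2
  rintro _ ⟨z, hz | hz, rfl⟩
  · obtain ⟨w, rfl⟩ := hz
    exact Or.inl (coe_pClosure_mem L (SetLike.coe_mem w))
  · exact Or.inr ⟨z, hz, rfl⟩

variable [CharP k p] [CharP K p] [IsPurelyInseparable k K]

theorem expleq_spanning (e d : ℕ)
    (hd : diCard k (↥(expleq k K p e)) p ≤ (d : Cardinal)) :
    ∃ V : Finset K, V.card ≤ p ^ d ∧ (1:K) ∈ V ∧ (V : Set K) ⊆ (expleq k K p e : Set K) ∧
      (expleq k K p e : Set K) ⊆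
        (Sp (pClosureOf p (expleq k K p e)) (V : Set K) : Set K) := by
  classical
  set L := expleq k K p e with hL
  haveI : CharP (↥L) p := charP_of_injective_algebraMap (algebraMap k ↥L).injective p
  obtain ⟨B, hB, hBcard⟩ := diCard_attained (p := p) (k := k) (K := ↥L)
  have hBfin : B.Finite := by
    rw [← Set.finite_coe_iff]
    rw [← Cardinal.lt_aleph0_iff_finite, hBcard]
    exact lt_of_le_of_lt hd (Cardinal.nat_lt_aleph0 d)
  haveI : Fintype ↥B := hBfin.fintype
  have hcardB : Fintype.card ↥B ≤ d := by
    have h1 : (Fintype.card ↥B : Cardinal) ≤ (d : Cardinal) := by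
      rw [← Cardinal.mk_fintype, hBcard]; exact hd
    exact_mod_cast h1
  set b : ↥B → K := fun i => ((i : ↥L) : K) with hb
  have hbL : ∀ i, b i ∈ L := fun i => SetLike.coe_mem _
  have hbp : ∀ i, (b i) ^ p ∈ pClosureOf p L := fun i =>
    subset_adjoin _ _ ⟨b i, hbL i, rfl⟩
  have hrange : ((↑) '' B : Set K) = Set.range b := by
    ext z
    constructor
    · rintro ⟨w, hw, rfl⟩; exact ⟨⟨w, hw⟩, rfl⟩
    · rintro ⟨i, rfl⟩; exact ⟨i, i.2, rfl⟩
  have houter := inner_to_outer L B hB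
  rw [hrange] at houter
  have hmono := closure_subset_Sp_monomials (p := p) (pClosureOf p L) b hbp
  set monoF : (↥B → Fin p) → K := fun ν => ∏ i, b i ^ (ν i : ℕ) with hmonoF
  set V : Finset K := Finset.image monoF Finset.univ with hV
  have hVset : (V : Set K) = Set.range monoF := by
    rw [hV, Finset.coe_image, Finset.coe_univ, Set.image_univ]
  refine ⟨V, ?_, ?_, ?_, ?_⟩
  · calc V.card ≤ Fintype.card (↥B → Fin p) := by
          rw [hV]; exact (Finset.card_image_le).trans (by rw [Finset.card_univ])
      _ = p ^ Fintype.card ↥B := by rw [Fintype.card_fun, Fintype.card_fin]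
      _ ≤ p ^ d := Nat.pow_le_pow_right (Fact.out : p.Prime).pos hcardB
  · have hp0 : 0 < p := (Fact.out : p.Prime).pos
    have : monoF (fun _ => ⟨0, hp0⟩) = 1 := by
      rw [hmonoF]; simp
    rw [hV]
    exact Finset.mem_image.mpr ⟨fun _ => ⟨0, hp0⟩, Finset.mem_univ _, this⟩
  · rw [hVset]
    rintro _ ⟨ν, rfl⟩
    exact prod_mem fun i _ => pow_mem (hbL i) _
  · rw [hVset]
    exact fun x hx => hmono (houter hx)

end E
end St11
namespace St11
set_option synthInstance.maxHeartbeats 400000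
section F
open IntermediateField Submodule

variable {p : ℕ} [Fact p.Prime] {k K : Type*} [Field k] [Field K] [Algebra k K]
  [CharP k p] [CharP K p] [IsPurelyInseparable k K]

theorem finset_exists_expleq (s : Finset K) : ∃ e, ∀ x ∈ s, x ∈ expleq k K p e := by
  classical
  induction s using Finset.induction with
  | empty => exact ⟨0, by simp⟩
  | @insert t s' _ ih =>
      obtain ⟨e', he'⟩ := ih
      obtain ⟨e₀, he₀⟩ := exists_mem_expleq (p := p) (k := k) t
      refine ⟨max e₀ e', fun x hx => ?_⟩
      rcases Finset.mem_insert.mp hx with rfl | hx'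
      · exact expleq_mono (le_max_left _ _) he₀
      · exact expleq_mono (le_max_right _ _) (he' x hx')

theorem top_spanning (d : ℕ)
    (hd : ∀ e : ℕ, diCard k (↥(expleq k K p e)) p ≤ (d : Cardinal)) :
    ∃ S : Finset K, (1:K) ∈ S ∧
      ∀ x : K, x ∈ Sp (pnClosure k K p 1) (S : Set K) := by
  classical
  set K₁ := pnClosure k K p 1 with hK₁
  have hbound : ∀ s : Finset K,
      (LinearIndependent (↥K₁) fun i : ↑(s : Set K) => (i : K)) → s.card ≤ p ^ d := by
    intro s hli
    obtain ⟨e, he⟩ := finset_exists_expleq (p := p) (k := k) s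
    obtain ⟨V, hVcard, hV1, hVL, hVspan⟩ := expleq_spanning e d (hd e)
    have hsub : ∀ x ∈ s, x ∈ Submodule.span (↥K₁) (V : Set K) := by
      intro x hx
      have h1 := hVspan (he x hx)
      have h2 : x ∈ Sp K₁ (V : Set K) :=
        Sp_mono_left (pClosureOf_le_pnClosure_one _) _ h1
      exact Sp_le_span h2
    haveI : FiniteDimensional (↥K₁) ↥(Submodule.span (↥K₁) (V : Set K)) :=
      FiniteDimensional.span_of_finite _ V.finite_toSet
    set v : ↑(s : Set K) → ↥(Submodule.span (↥K₁) (V : Set K)) :=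
      fun i => ⟨(i : K), hsub i (Finset.mem_coe.mp i.2)⟩ with hv
    have hliv : LinearIndependent (↥K₁) v := by
      apply LinearIndependent.of_comp (Submodule.span (↥K₁) (V : Set K)).subtype
      exact hli
    have hcard := hliv.fintype_card_le_finrank
    have hcard2 : s.card ≤ Module.finrank (↥K₁) ↥(Submodule.span (↥K₁) (V : Set K)) := by
      simpa using hcard
    refine hcard2.trans ?_
    have h3 := finrank_span_le_card (R := ↥K₁) (V : Set K)
    rw [Finset.toFinset_coe] at h3
    exact h3.trans hVcard
  set A := {n : ℕ | ∃ s : Finset K,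
      (LinearIndependent (↥K₁) fun i : ↑(s : Set K) => (i : K)) ∧ s.card = n} with hA
  have h0A : (0 : ℕ) ∈ A := by
    refine ⟨∅, ?_, Finset.card_empty⟩
    rw [Finset.coe_empty]
    exact linearIndependent_empty _ _
  have hbddA : BddAbove A := by
    refine ⟨p ^ d, ?_⟩
    rintro n ⟨s, hs, rfl⟩
    exact hbound s hs
  obtain ⟨s₀, hs₀li, hs₀card⟩ := Nat.sSup_mem ⟨0, h0A⟩ hbddA
  have hspan : ∀ x : K, x ∈ Submodule.span (↥K₁) (s₀ : Set K) := by
    intro x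
    by_contra hx
    have hxs : x ∉ (s₀ : Set K) := fun h => hx (Submodule.subset_span h)
    have hli2 := LinearIndepOn.id_insert hs₀li hx
    have hmemA : s₀.card + 1 ∈ A := by
      refine ⟨insert x s₀, ?_, ?_⟩
      · rw [Finset.coe_insert]; exact hli2
      · rw [Finset.card_insert_of_notMem fun h => hxs (Finset.mem_coe.mpr h)]
    have hle := le_csSup hbddA hmemA
    rw [← hs₀card] at hle
    omega
  refine ⟨insert 1 s₀, Finset.mem_insert_self _ _, fun x => ?_⟩
  have h2 : x ∈ Submodule.span (↥K₁) ((insert (1:K) s₀ : Finset K) : Set K) := by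
    refine Submodule.span_mono ?_ (hspan x)
    rw [Finset.coe_insert]
    exact Set.subset_insert _ _
  exact span_le_Sp h2

/-- `expleq E` is contained in the span of a finite set over `k`. -/
theorem expleq_findim (E d : ℕ)
    (hd : ∀ e : ℕ, diCard k (↥(expleq k K p e)) p ≤ (d : Cardinal)) :
    ∃ U : Set K, U.Finite ∧ (expleq k K p E : Set K) ⊆ ↑(Submodule.span k U) := by
  obtain ⟨V, hVcard, hV1, hVL, hVspan⟩ := expleq_spanning E d (hd E)
  set X : ℕ → IntermediateField k K := fun i => (pClosureOf p)^[i] (expleq k K p E) with hX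
  have hX0 : X 0 = expleq k K p E := rfl
  have hXsucc : ∀ i, X (i + 1) = pClosureOf p (X i) := fun i =>
    Function.iterate_succ_apply' (pClosureOf p) i _
  set W : ℕ → Set K := fun i => ((fun z : K => z ^ p)^[i]) '' (V : Set K) with hW
  have hW0 : W 0 = (V : Set K) := Set.image_id _
  have hWsucc : ∀ i, W (i + 1) = (fun z : K => z ^ p) '' W i := by
    intro i
    rw [hW]
    simp only [Function.iterate_succ']
    exact Set.image_comp _ _ _
  have hWfin : ∀ i, (W i).Finite := fun i => (V.finite_toSet).image _
  have hclaim1 : ∀ i, (1:K) ∈ W i ∧ W i ⊆ (X i : Set K) ∧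
      (X i : Set K) ⊆ (Sp (X (i+1)) (W i) : Set K) := by
    intro i
    induction i with
    | zero =>
        refine ⟨by rw [hW0]; exact hV1, by rw [hW0, hX0]; exact hVL, ?_⟩
        rw [hW0, hX0, hXsucc 0, hX0]
        exact hVspan
    | succ i ih =>
        obtain ⟨ih1, ih2, ih3⟩ := ih
        refine ⟨?_, ?_, ?_⟩
        · rw [hWsucc]; exact ⟨1, ih1, one_pow p⟩
        · rw [hWsucc, hXsucc]
          rintro _ ⟨z, hz, rfl⟩
          exact subset_adjoin _ _ ⟨z, ih2 hz, rfl⟩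
        · have h := pClosureOf_subset_Sp (p := p) ih1 ih2 ih3
          rw [← hXsucc i, ← hXsucc (i+1), ← hWsucc i] at h
          exact h
  have hclaim2 : ∀ i, ∃ U : Set K, U.Finite ∧
      (expleq k K p E : Set K) ⊆ (Sp (X (i+1)) U : Set K) := by
    intro i
    induction i with
    | zero => exact ⟨W 0, hWfin 0, (hclaim1 0).2.2⟩
    | succ i ih =>
        obtain ⟨U, hUfin, hUspan⟩ := ih
        refine ⟨Set.image2 (· * ·) (W (i+1)) U, Set.Finite.image2 _ (hWfin _) hUfin, ?_⟩
        exact hUspan.trans (Sp_comp (hclaim1 (i+1)).2.2)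
  have hclaim3 : ∀ i, X i ≤ expleq k K p (E - i) := by
    intro i
    induction i with
    | zero => rw [hX0]; exact le_of_eq (by rw [Nat.sub_zero])
    | succ i ih =>
        rw [hXsucc]
        rcases Nat.eq_zero_or_pos (E - i) with h0 | hpos
        · rw [show E - (i+1) = 0 by omega]
          refine (pClosureOf_mono ih).trans ?_
          rw [h0]
          exact pClosureOf_le_self _
        · obtain ⟨j, hj⟩ : ∃ j, E - i = j + 1 := ⟨E - i - 1, by omega⟩
          rw [show E - (i+1) = j by omega]
          refine (pClosureOf_mono ih).trans ?_
          rw [hj]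
          exact pClosureOf_expleq_le
  obtain ⟨U, hUfin, hUspan⟩ := hclaim2 E
  have hbot : X (E + 1) ≤ ⊥ := by
    refine le_trans (hclaim3 (E+1)) ?_
    rw [show E - (E+1) = 0 by omega]
    exact expleq_zero_le
  exact ⟨U, hUfin, hUspan.trans (Sp_bot_le hbot U)⟩

end F
end St11

/-- If `K/k` is `q`-finite purely inseparable of unbounded exponent,
then `rp(K/k)` has unbounded exponent over `k`; in particular `rp(K/k) ≠ k`. -/
theorem rp_unboundedExp_of_qFinite
    (p : ℕ) [Fact p.Prime] (k K : Type*) [Field k] [Field K] [Algebra k K] [CharP k p]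
    [IsPurelyInseparable k K]
    (hq : di k K p < Cardinal.aleph0)
    (hub : UnboundedExp k K p) :
    (∀ e : ℕ, ∃ x ∈ rp k K p, x ^ p ^ e ∉ (algebraMap k K).range) ∧
      rp k K p ≠ ⊥ := by
  classical
  haveI : CharP K p := charP_of_injective_algebraMap (algebraMap k K).injective p
  obtain ⟨d, hdeq⟩ := Cardinal.lt_aleph0.mp hq
  have hd : ∀ e : ℕ, diCard k (↥(expleq k K p e)) p ≤ (d : Cardinal) := by
    intro e
    have h1 : diCard k (↥(expleq k K p e)) p ≤ di k K p := by
      rw [di]; exact le_ciSup (Cardinal.bddAbove_range _) e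
    rwa [hdeq] at h1
  have powpow : ∀ (z : K) (n e : ℕ), (z ^ p ^ n) ^ p ^ e = z ^ p ^ (n + e) := by
    intro z n e; rw [← pow_mul, ← pow_add]
  have hubKn : ∀ n e : ℕ, ∃ x, x ∈ pnClosure k K p n ∧
      x ^ p ^ e ∉ (algebraMap k K).range := by
    intro n e
    obtain ⟨z, hz⟩ := hub (n + e)
    exact ⟨z ^ p ^ n, St11.pow_pn_mem n z, by rw [powpow]; exact hz⟩
  obtain ⟨S, hS1, hSspan⟩ := St11.top_spanning (p := p) (k := k) (K := K) d hd
  obtain ⟨s₀, hs₀⟩ := St11.finset_exists_expleq (p := p) (k := k) S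
  have hiter : ∀ (m : ℕ) (z : K), ((fun z : K => z ^ p)^[m]) z = z ^ p ^ m := by
    intro m
    induction m with
    | zero => intro z; simp
    | succ m ih => intro z; rw [Function.iterate_succ_apply', ih, ← pow_mul, ← pow_succ]
  set W : ℕ → Set K := fun m => ((fun z : K => z ^ p)^[m]) '' (S : Set K) with hW
  have hWsucc : ∀ m, W (m+1) = (fun z : K => z ^ p) '' W m := by
    intro m; rw [hW]; simp only [Function.iterate_succ']; exact Set.image_comp _ _ _
  have hW1 : ∀ m, (1:K) ∈ W m := by
    intro m
    exact ⟨1, Finset.mem_coe.mpr hS1, by rw [hiter, one_pow]⟩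
  have hWKn : ∀ m, W m ⊆ (pnClosure k K p m : Set K) := by
    rintro m _ ⟨z, hz, rfl⟩
    rw [hiter]
    exact St11.pow_pn_mem m z
  have hWF : ∀ m, W m ⊆ (expleq k K p s₀ : Set K) := by
    rintro m _ ⟨z, hz, rfl⟩
    rw [hiter]
    refine SetLike.mem_coe.mpr (St11.mem_expleq.mpr ?_)
    obtain ⟨c, hc⟩ := St11.mem_expleq.mp (hs₀ z (Finset.mem_coe.mp hz))
    refine ⟨c ^ p ^ m, ?_⟩
    rw [map_pow, hc, ← pow_mul, ← pow_mul, mul_comm (p ^ s₀) (p ^ m)]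
  have hmain : ∀ m, (pnClosure k K p m : Set K) ⊆
      (St11.Sp (pnClosure k K p (m+1)) (W m) : Set K) := by
    intro m
    induction m with
    | zero =>
        intro x _
        have hW0 : W 0 = (S : Set K) := by rw [hW]; simp
        rw [hW0]
        exact hSspan x
    | succ m ih =>
        have h := St11.pClosureOf_subset_Sp (p := p) (hW1 m) (hWKn m) ih
        rw [St11.pClosureOf_pnClosure, St11.pClosureOf_pnClosure, ← hWsucc] at h
        exact h
  set F := expleq k K p s₀ with hF
  obtain ⟨U, hUfin, hUspan⟩ := St11.expleq_findim (p := p) (k := k) (K := K) s₀ d hd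
  haveI hfdU : FiniteDimensional k ↥(Submodule.span k U) :=
    FiniteDimensional.span_of_finite _ hUfin
  set A : ℕ → Submodule k K :=
    fun m => Subalgebra.toSubmodule (pnClosure k K p m ⊓ F).toSubalgebra with hA
  have hAmem : ∀ (m : ℕ) (x : K), x ∈ A m ↔ x ∈ pnClosure k K p m ⊓ F := fun m x => Iff.rfl
  have hAle : ∀ m, A m ≤ Submodule.span k U := by
    intro m x hx
    exact hUspan ((hAmem m x).mp hx).2
  have hfd : ∀ m, FiniteDimensional k ↥(A m) :=
    fun m => Submodule.finiteDimensional_of_le (hAle m)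
  have hAmono : ∀ m, A (m+1) ≤ A m := by
    intro m x hx
    have hx' := (hAmem (m+1) x).mp hx
    exact (hAmem m x).mpr ⟨St11.pnClosure_succ_le m hx'.1, hx'.2⟩
  have hstab : ∃ m, A m ≤ A (m+1) := by
    by_contra hc
    push_neg at hc
    have hlt : ∀ m, A (m+1) < A m :=
      fun m => lt_of_le_of_ne (hAmono m) fun he => hc m he.ge
    have hdec : ∀ m, Module.finrank k ↥(A (m+1)) < Module.finrank k ↥(A m) := by
      intro m
      haveI := hfd m
      exact Submodule.finrank_lt_finrank_of_lt (hlt m)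
    have hsum : ∀ m, Module.finrank k ↥(A m) + m ≤ Module.finrank k ↥(A 0) := by
      intro m
      induction m with
      | zero => omega
      | succ m ih => have := hdec m; omega
    have := hsum (Module.finrank k ↥(A 0) + 1)
    omega
  obtain ⟨m, hm⟩ := hstab
  have hKnle : pnClosure k K p m ≤ pnClosure k K p (m+1) := by
    intro x hx
    have h1 := hmain m hx
    have hWsub : W m ⊆ (pnClosure k K p (m+1) : Set K) := by
      intro z hz
      have hzA : z ∈ A m := (hAmem m z).mpr ⟨hWKn m hz, hWF m hz⟩
      exact SetLike.mem_coe.mpr ((hAmem (m+1) z).mp (hm hzA)).1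
    have hsub2 : St11.Sp (pnClosure k K p (m+1)) (W m) ≤
        Subalgebra.toSubmodule (pnClosure k K p (m+1)).toSubalgebra := by
      rw [St11.Sp, Submodule.span_le]
      rintro _ ⟨y, hy, s, hs, rfl⟩
      have hys : y * s ∈ pnClosure k K p (m+1) :=
        mul_mem hy (SetLike.mem_coe.mp (hWsub hs))
      exact hys
    exact hsub2 h1
  have hKn_eq : pnClosure k K p (m+1) = pnClosure k K p m :=
    le_antisymm (St11.pnClosure_succ_le m) hKnle
  have hrelperf : pClosureOf p (pnClosure k K p m) = pnClosure k K p m := by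
    rw [St11.pClosureOf_pnClosure, hKn_eq]
  have hle_rp : pnClosure k K p m ≤ rp k K p := le_sSup hrelperf
  constructor
  · intro e
    obtain ⟨x, hxKn, hxe⟩ := hubKn m e
    exact ⟨x, hle_rp hxKn, hxe⟩
  · intro hbot
    obtain ⟨x, hxKn, hxe⟩ := hubKn m 0
    have hx : x ∈ rp k K p := hle_rp hxKn
    rw [hbot, IntermediateField.mem_bot] at hx
    obtain ⟨c, hc⟩ := hx
    refine hxe ?_
    rw [pow_zero, pow_one]
    exact ⟨c, hc⟩
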